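/- Let q be a prime power and k ≥ 1, n = mk + r with 0 ≤ r < k. Then the maximum size of a partial spread (a family of pairwise disjoint k-dimensional subspaces of F_q^n) when k divides n (r = 0) is exactly (q^n - 1)/(q^k - 1); in particular a spread of k-spaces of F_q^n exists when k divides n. -/

import Mathlib

open Polynomial Module

section Counting

variable {F : Type*} [Field F] [Fintype F] {n k : ℕ}

lemma aux_spread_count (S : Finset (Submodule F (Fin n → F)))
    (hdim : ∀ W ∈ S, Module.finrank F W = k)
    (hdisj : ∀ W ∈ S, ∀ W' ∈ S, W ≠ W' → W ⊓ W' = ⊥) :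
    S.card * (Fintype.card F ^ k - 1) ≤ Fintype.card F ^ n - 1 ∧
      ((∀ v : Fin n → F, v ≠ 0 → ∃ W ∈ S, v ∈ W) →
        S.card * (Fintype.card F ^ k - 1) = Fintype.card F ^ n - 1) := by
  classical
  set f : Submodule F (Fin n → F) → Finset (Fin n → F) :=
    fun W => (Set.toFinset (W : Set (Fin n → F))).erase 0 with hf
  have hmemf : ∀ (W : Submodule F (Fin n → F)) (x : Fin n → F),
      x ∈ f W ↔ x ≠ 0 ∧ x ∈ W := by
    intro W x
    simp [hf, Set.mem_toFinset]
  have hcard : ∀ W ∈ S, (f W).card = Fintype.card F ^ k - 1 := by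
    intro W hW
    rw [hf]
    simp only
    rw [Finset.card_erase_of_mem (by simp [Set.mem_toFinset]), Set.toFinset_card]
    simp only [SetLike.coe_sort_coe]
    rw [card_eq_pow_finrank (K := F) (V := W), hdim W hW]
  have hdisjf : ∀ W ∈ S, ∀ W' ∈ S, W ≠ W' → Disjoint (f W) (f W') := by
    intro W hW W' hW' hne
    rw [Finset.disjoint_left]
    intro x hx hx'
    rw [hmemf] at hx hx'
    have hx0 : x ∈ W ⊓ W' := ⟨hx.2, hx'.2⟩
    rw [hdisj W hW W' hW' hne] at hx0
    exact hx.1 (by simpa using hx0)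
  have hbu : (S.biUnion f).card = S.card * (Fintype.card F ^ k - 1) := by
    rw [Finset.card_biUnion hdisjf, Finset.sum_congr rfl hcard, Finset.sum_const, smul_eq_mul]
  have hsub : S.biUnion f ⊆ Finset.univ.erase 0 := by
    intro x hx
    rw [Finset.mem_biUnion] at hx
    obtain ⟨W, _, hxW⟩ := hx
    rw [hmemf] at hxW
    exact Finset.mem_erase.mpr ⟨hxW.1, Finset.mem_univ _⟩
  have huniv : (Finset.univ.erase (0 : Fin n → F)).card = Fintype.card F ^ n - 1 := by
    rw [Finset.card_erase_of_mem (Finset.mem_univ _), Finset.card_univ, Fintype.card_fun,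
      Fintype.card_fin]
  constructor
  · rw [← hbu, ← huniv]
    exact Finset.card_le_card hsub
  · intro hcov
    rw [← hbu, ← huniv]
    congr 1
    apply Finset.Subset.antisymm hsub
    intro x hx
    rw [Finset.mem_erase] at hx
    obtain ⟨W, hW, hxW⟩ := hcov x hx.1
    rw [Finset.mem_biUnion]
    exact ⟨W, hW, (hmemf W x).mpr ⟨hx.1, hxW⟩⟩

end Counting

section Construction

lemma aux_spread_construct (F K : Type*) [Field F] [Fintype F] [Field K] [Fintype K]
    [Algebra F K] {n k : ℕ} (hfr : Module.finrank F K = k) (hdvd : k ∣ n) :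
    ∃ S : Finset (Submodule F (Fin n → F)),
      (∀ W ∈ S, Module.finrank F W = k) ∧
      (∀ W ∈ S, ∀ W' ∈ S, W ≠ W' → W ⊓ W' = ⊥) ∧
      (∀ v : Fin n → F, v ≠ 0 → ∃ W ∈ S, v ∈ W) := by
  classical
  obtain ⟨m, rfl⟩ := hdvd
  have hdim : Module.finrank F (Fin m → K) = Module.finrank F (Fin (k * m) → F) := by
    rw [← Module.finrank_mul_finrank F K (Fin m → K), Module.finrank_fin_fun,
      Module.finrank_fin_fun, hfr]
  let e : (Fin m → K) ≃ₗ[F] (Fin (k * m) → F) := LinearEquiv.ofFinrankEq _ _ hdim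
  let g : Submodule K (Fin m → K) → Submodule F (Fin (k * m) → F) :=
    fun U => Submodule.map (e : (Fin m → K) →ₗ[F] (Fin (k * m) → F)) (U.restrictScalars F)
  have hg_inj : Function.Injective g := by
    intro U U' h
    have h2 : U.restrictScalars F = U'.restrictScalars F :=
      Submodule.map_injective_of_injective (f := (e : (Fin m → K) →ₗ[F] (Fin (k * m) → F)))
      e.injective h
    exact Submodule.restrictScalars_injective F _ _ h2
  have hg_inf : ∀ U U', g U ⊓ g U' = g (U ⊓ U') := by
    intro U U'
    have h1 : (U ⊓ U').restrictScalars F = U.restrictScalars F ⊓ U'.restrictScalars F := by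
      ext x; simp
    rw [show g (U ⊓ U') = Submodule.map _ ((U ⊓ U').restrictScalars F) from rfl, h1,
      Submodule.map_inf (e : (Fin m → K) →ₗ[F] (Fin (k * m) → F)) e.injective]
  have hg_rank : ∀ (v : Fin m → K), v ≠ 0 → Module.finrank F (g (Submodule.span K {v})) = k := by
    intro v hv
    have h1 : Module.finrank F (g (Submodule.span K {v})) =
        Module.finrank F ((Submodule.span K {v}).restrictScalars F) :=
      LinearEquiv.finrank_map_eq e _
    have h2 : Module.finrank F K * Module.finrank K ((Submodule.span K {v}).restrictScalars F)
        = Module.finrank F ((Submodule.span K {v}).restrictScalars F) :=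
      Module.finrank_mul_finrank F K _
    have h3 : Module.finrank K ((Submodule.span K {v}).restrictScalars F)
        = Module.finrank K (Submodule.span K {v}) :=
      (Submodule.restrictScalarsEquiv F K (Fin m → K) (Submodule.span K {v})).finrank_eq
    rw [h1, ← h2, h3, finrank_span_singleton hv, hfr, mul_one]
  refine ⟨(Finset.univ.erase (0 : Fin m → K)).image (fun v => g (Submodule.span K {v})),
    ?_, ?_, ?_⟩
  · intro W hW
    rw [Finset.mem_image] at hW
    obtain ⟨v, hv, rfl⟩ := hW
    rw [Finset.mem_erase] at hv
    exact hg_rank v hv.1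
  · intro W hW W' hW' hne
    rw [Finset.mem_image] at hW hW'
    obtain ⟨v, hv, rfl⟩ := hW
    obtain ⟨w, hw, rfl⟩ := hW'
    rw [Finset.mem_erase] at hv hw
    have hspan : Submodule.span K {v} ≠ Submodule.span K {w} := fun h => hne (by rw [h])
    have hbot : Submodule.span K {v} ⊓ Submodule.span K {w} = ⊥ := by
      rw [Submodule.eq_bot_iff]
      intro x hx
      rw [Submodule.mem_inf] at hx
      by_contra hx0
      obtain ⟨c, rfl⟩ := Submodule.mem_span_singleton.mp hx.1
      obtain ⟨d, hd⟩ := Submodule.mem_span_singleton.mp hx.2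
      have hc : c ≠ 0 := by rintro rfl; simp at hx0
      have hd0 : d ≠ 0 := by rintro rfl; simp [← hd] at hx0
      apply hspan
      rw [← Submodule.span_singleton_smul_eq (R := K) (isUnit_iff_ne_zero.mpr hc) v, ← hd,
        Submodule.span_singleton_smul_eq (isUnit_iff_ne_zero.mpr hd0) w]
    rw [hg_inf, hbot]
    show Submodule.map _ ((⊥ : Submodule K (Fin m → K)).restrictScalars F) = ⊥
    rw [Submodule.restrictScalars_bot, Submodule.map_bot]
  · intro v hv
    have hw : e.symm v ≠ 0 := by
      intro h
      apply hv
      have := congrArg e h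
      simpa using this
    refine ⟨g (Submodule.span K {e.symm v}), ?_, ?_⟩
    · rw [Finset.mem_image]
      exact ⟨e.symm v, Finset.mem_erase.mpr ⟨hw, Finset.mem_univ _⟩, rfl⟩
    · refine Submodule.mem_map.mpr ⟨e.symm v, ?_, by simp⟩
      rw [Submodule.restrictScalars_mem]
      exact Submodule.mem_span_singleton_self _

end Construction

theorem spread_exists_and_max_partial_spread (q n k : ℕ) (F : Type*) [Field F] [Fintype F]
    [DecidableEq (Submodule F (Fin n → F))]
    (hq : Fintype.card F = q) (hk : 1 ≤ k) (hkn : k ≤ n) (hdvd : k ∣ n) :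
    IsGreatest {m : ℕ | ∃ S : Finset (Submodule F (Fin n → F)), S.card = m ∧
        (∀ W ∈ S, Module.finrank F W = k) ∧
        (∀ W ∈ S, ∀ W' ∈ S, W ≠ W' → W ⊓ W' = ⊥)}
      ((q ^ n - 1) / (q ^ k - 1)) ∧
      ∃ S : Finset (Submodule F (Fin n → F)), S.card = (q ^ n - 1) / (q ^ k - 1) ∧
        (∀ W ∈ S, Module.finrank F W = k) ∧
        (∀ W ∈ S, ∀ W' ∈ S, W ≠ W' → W ⊓ W' = ⊥) ∧
        (∀ v : Fin n → F, v ≠ 0 → ∃ W ∈ S, v ∈ W) := by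
  classical
  subst hq
  have hq2 : 1 < Fintype.card F := Fintype.one_lt_card
  obtain ⟨e, hp, he⟩ := FiniteField.card F (ringChar F)
  set p := ringChar F with hpdef
  haveI : Fact p.Prime := ⟨hp⟩
  set KK := GaloisField p ((e : ℕ) * k) with hKK
  have hek : (e : ℕ) * k ≠ 0 := Nat.mul_ne_zero e.pos.ne' (by omega)
  have hcardKK : Nat.card KK = p ^ ((e : ℕ) * k) := GaloisField.card p _ hek
  haveI : Finite KK := (Nat.card_pos_iff.mp (by rw [hcardKK]; exact pow_pos hp.pos _)).2
  haveI : Fintype KK := Fintype.ofFinite KK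
  have hcardKK' : Fintype.card KK = Fintype.card F ^ k := by
    rw [← Nat.card_eq_fintype_card, hcardKK, he, pow_mul]
  letI : Algebra (ZMod p) F := ZMod.algebra _ _
  haveI : IsSplittingField (ZMod p) F (X ^ p ^ (e : ℕ) - X) :=
    FiniteField.isSplittingField_of_card_eq _ _ he
  -- the polynomial X^(p^e) - X divides X^(p^(e*k)) - X
  have ha2 : 2 ≤ p ^ (e : ℕ) := he ▸ hq2
  have hdvdpoly : (X ^ p ^ (e : ℕ) - X : (ZMod p)[X]) ∣ X ^ p ^ ((e : ℕ) * k) - X := by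
    set a := p ^ (e : ℕ) with hadef
    obtain ⟨t, ht⟩ := Nat.sub_dvd_pow_sub_pow a 1 k
    rw [one_pow] at ht
    have key : (X ^ (a - 1) - 1 : (ZMod p)[X]) ∣ X ^ (a ^ k - 1) - 1 := by
      have h := sub_dvd_pow_sub_pow (X ^ (a - 1) : (ZMod p)[X]) 1 t
      rw [one_pow, ← pow_mul, ← ht] at h
      exact h
    have e1 : (X ^ a - X : (ZMod p)[X]) = X * (X ^ (a - 1) - 1) := by
      rw [mul_sub, mul_one, ← pow_succ', Nat.sub_add_cancel (by omega)]
    have e2 : (X ^ p ^ ((e : ℕ) * k) - X : (ZMod p)[X]) = X * (X ^ (a ^ k - 1) - 1) := by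
      rw [mul_sub, mul_one, ← pow_succ', Nat.sub_add_cancel, pow_mul]
      exact Nat.one_le_pow _ _ (by omega)
    rw [e1, e2]
    exact mul_dvd_mul_left X key
  have hsplits : Splits ((X ^ p ^ (e : ℕ) - X : (ZMod p)[X]).map (algebraMap (ZMod p) KK)) := by
    have hbig : Splits ((X ^ p ^ ((e : ℕ) * k) - X : (ZMod p)[X]).map (algebraMap (ZMod p) KK)) := by
      have h := FiniteField.splits_X_pow_card_sub_X (K := KK) (p := p)
      rwa [hcardKK', he, ← pow_mul] at h
    exact Splits.of_dvd hbig
      (Polynomial.map_ne_zero (FiniteField.X_pow_card_pow_sub_X_ne_zero _ hek hp.one_lt))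
      (Polynomial.map_dvd (algebraMap (ZMod p) KK) hdvdpoly)
  let f : F →ₐ[ZMod p] KK := IsSplittingField.lift F (X ^ p ^ (e : ℕ) - X) hsplits
  letI : Algebra F KK := (f.toRingHom).toAlgebra
  have hfr : Module.finrank F KK = k := by
    have h := card_eq_pow_finrank (K := F) (V := KK)
    rw [hcardKK'] at h
    exact (Nat.pow_right_injective hq2 h).symm
  obtain ⟨S, hSdim, hSdisj, hScov⟩ := aux_spread_construct F KK hfr hdvd
  obtain ⟨hle, heq⟩ := aux_spread_count S hSdim hSdisj
  have heq' := heq hScov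
  have hpos : 0 < Fintype.card F ^ k - 1 := by
    have : 1 < Fintype.card F ^ k := Nat.one_lt_pow (by omega) hq2
    omega
  have hScard : S.card = (Fintype.card F ^ n - 1) / (Fintype.card F ^ k - 1) := by
    rw [← heq', Nat.mul_div_cancel _ hpos]
  refine ⟨⟨⟨S, hScard, hSdim, hSdisj⟩, ?_⟩, S, hScard, hSdim, hSdisj, hScov⟩
  rintro M ⟨S', rfl, hd, hj⟩
  have hle' := (aux_spread_count S' hd hj).1
  exact (Nat.le_div_iff_mul_le hpos).mpr hle'
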